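/- Let E be a finite set of size m, and g, r, w, a, b, c* : E → ℝ with r_e, w_e > 0 and a_e, b_e ≥ 0. Let K ≥ 1, q ≥ 2 real, p ≥ q real. Assume: ‖R a‖₂ ≤ 2K, ‖W b‖_q^q ≤ 5qK^q, ‖R c*‖₂ ≤ 1, ‖W c*‖_p ≤ 1, and m^{1/q - 1/p} ≤ 2. Define ℓ_e = K^{q-2} r_e² a_e + w_e^q b_e^{q-1}. Then ∑_e ℓ_e |c*_e| ≤ 20 q K^{q-1}. -/

import Mathlib

open Finset Real

theorem stmt_8 {E : Type*} [Fintype E] (g r w a b cs : E → ℝ) (K q p : ℝ)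
    (hr : ∀ e, 0 < r e) (hw : ∀ e, 0 < w e)
    (ha : ∀ e, 0 ≤ a e) (hb : ∀ e, 0 ≤ b e)
    (hK : 1 ≤ K) (hq : 2 ≤ q) (hpq : q ≤ p)
    (hRa : Real.sqrt (∑ e, (r e * a e) ^ 2) ≤ 2 * K)
    (hWb : ∑ e, (w e * b e) ^ q ≤ 5 * q * K ^ q)
    (hRc : Real.sqrt (∑ e, (r e * cs e) ^ 2) ≤ 1)
    (hWc : (∑ e, |w e * cs e| ^ p) ^ (1 / p) ≤ 1)
    (hm : ((Fintype.card E : ℝ)) ^ (1 / q - 1 / p) ≤ 2) :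
    ∑ e, (K ^ (q - 2) * r e ^ 2 * a e + w e ^ q * b e ^ (q - 1)) * |cs e| ≤
      20 * q * K ^ (q - 1) := by
  have hK0 : (0:ℝ) < K := lt_of_lt_of_le one_pos hK
  have hq0 : (0:ℝ) < q := by linarith
  have hq1 : (1:ℝ) < q := by linarith
  have hp0 : (0:ℝ) < p := by linarith
  have hKq1 : (0:ℝ) < K ^ (q - 1) := Real.rpow_pos_of_pos hK0 _
  -- Part 1 : Cauchy-Schwarz
  have h1 : ∑ e, K ^ (q - 2) * r e ^ 2 * a e * |cs e| ≤ 2 * K ^ (q - 1) := by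
    have key : ∑ e, (r e * a e) * (r e * |cs e|) ≤
        Real.sqrt (∑ e, (r e * a e) ^ 2) * Real.sqrt (∑ e, (r e * |cs e|) ^ 2) :=
      Real.sum_mul_le_sqrt_mul_sqrt _ _ _
    have e1 : (∑ e, (r e * |cs e|) ^ 2) = ∑ e, (r e * cs e) ^ 2 := by
      simp [mul_pow, sq_abs]
    rw [e1] at key
    have key2 : ∑ e, (r e * a e) * (r e * |cs e|) ≤ 2 * K :=
      le_trans key (by nlinarith [Real.sqrt_nonneg (∑ e, (r e * cs e) ^ 2),
        Real.sqrt_nonneg (∑ e, (r e * a e) ^ 2)])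
    have hKq2 : (0:ℝ) ≤ K ^ (q - 2) := (Real.rpow_pos_of_pos hK0 _).le
    calc ∑ e, K ^ (q - 2) * r e ^ 2 * a e * |cs e|
        = K ^ (q - 2) * ∑ e, (r e * a e) * (r e * |cs e|) := by
          rw [Finset.mul_sum]; congr 1; ext e; ring
      _ ≤ K ^ (q - 2) * (2 * K) := mul_le_mul_of_nonneg_left key2 hKq2
      _ = 2 * K ^ (q - 1) := by
          rw [show q - 1 = (q - 2) + 1 by ring, Real.rpow_add hK0, Real.rpow_one]; ring
  -- Norm comparison : ‖W c‖_q ≤ 2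
  have hWcq : (∑ e, |w e * cs e| ^ q) ^ (1 / q) ≤ 2 := by
    rcases eq_or_lt_of_le hpq with rfl | hlt
    · exact le_trans hWc one_le_two
    · have hpq1 : (1:ℝ) < p / q := (one_lt_div hq0).2 hlt
      have hconj : (p / q).HolderConjugate ((p/q) / (p/q - 1)) :=
        Real.HolderConjugate.conjExponent hpq1
      have key := Real.inner_le_Lp_mul_Lq (univ : Finset E)
        (fun e => |w e * cs e| ^ q) (fun _ => (1:ℝ)) hconj
      simp only [mul_one, abs_one, Real.one_rpow, Finset.sum_const, nsmul_eq_mul] at key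
      have e2 : ∀ x : E, |(|w x * cs x| ^ q)| ^ (p / q) = |w x * cs x| ^ p := by
        intro x
        rw [abs_of_nonneg (Real.rpow_nonneg (abs_nonneg _) _),
          ← Real.rpow_mul (abs_nonneg _), show q * (p / q) = p by rw [mul_comm, div_mul_cancel₀ _ hq0.ne']]
      simp only [e2] at key
      have eexp : 1 / ((p/q) / (p/q - 1)) = 1 - q / p := by field_simp
      rw [eexp] at key
      have hsum0 : (0:ℝ) ≤ ∑ e, |w e * cs e| ^ q :=
        Finset.sum_nonneg fun e _ => Real.rpow_nonneg (abs_nonneg _) _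
      have hsump0 : (0:ℝ) ≤ ∑ e, |w e * cs e| ^ p :=
        Finset.sum_nonneg fun e _ => Real.rpow_nonneg (abs_nonneg _) _
      have hRHS0 : (0:ℝ) ≤ (∑ e, |w e * cs e| ^ p) ^ (1/(p/q)) *
          ((Fintype.card E : ℝ)) ^ (1 - q/p) :=
        mul_nonneg (Real.rpow_nonneg hsump0 _) (Real.rpow_nonneg (Nat.cast_nonneg _) _)
      have step : (∑ e, |w e * cs e| ^ q) ^ (1 / q) ≤
          ((∑ e, |w e * cs e| ^ p) ^ (1/(p/q)) *
            ((Fintype.card E : ℝ)) ^ (1 - q/p)) ^ (1 / q) :=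
        Real.rpow_le_rpow hsum0 key (by positivity)
      rw [Real.mul_rpow (Real.rpow_nonneg hsump0 _) (Real.rpow_nonneg (Nat.cast_nonneg _) _),
        ← Real.rpow_mul hsump0, ← Real.rpow_mul (Nat.cast_nonneg _),
        show (1/(p/q)) * (1/q) = 1/p by rw [one_div_div]; field_simp,
        show (1 - q/p) * (1/q) = 1/q - 1/p by
          rw [sub_mul, one_mul, div_mul_div_comm, mul_one, mul_comm p q,
            div_mul_eq_div_div, div_self hq0.ne', one_div]] at step
      refine step.trans ?_
      calc (∑ e, |w e * cs e| ^ p) ^ (1/p) * ((Fintype.card E : ℝ)) ^ (1/q - 1/p)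
          ≤ 1 * 2 := mul_le_mul hWc hm (Real.rpow_nonneg (Nat.cast_nonneg _) _) one_pos.le
        _ = 2 := one_mul 2
  -- Part 2 : Hölder
  have h2 : ∑ e, w e ^ q * b e ^ (q - 1) * |cs e| ≤ 10 * q * K ^ (q - 1) := by
    have hconj2 : (q / (q - 1)).HolderConjugate q :=
      (Real.HolderConjugate.conjExponent hq1).symm
    have key := Real.inner_le_Lp_mul_Lq (univ : Finset E)
      (fun e => (w e * b e) ^ (q - 1)) (fun e => w e * |cs e|) hconj2
    have e3 : ∀ x : E, (w x * b x) ^ (q - 1) * (w x * |cs x|) =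
        w x ^ q * b x ^ (q - 1) * |cs x| := by
      intro x
      rw [Real.mul_rpow (hw x).le (hb x),
        show q = (q - 1) + 1 by ring, Real.rpow_add (hw x), Real.rpow_one]
      ring
    have e4 : ∀ x : E, |(w x * b x) ^ (q - 1)| ^ (q / (q - 1)) = (w x * b x) ^ q := by
      intro x
      rw [abs_of_nonneg (Real.rpow_nonneg (mul_nonneg (hw x).le (hb x)) _),
        ← Real.rpow_mul (mul_nonneg (hw x).le (hb x)),
        show (q - 1) * (q / (q - 1)) = q by rw [mul_comm, div_mul_cancel₀ _ (by linarith : q - 1 ≠ 0)]]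
    have e5 : ∀ x : E, abs (w x * |cs x|) ^ q = |w x * cs x| ^ q := by
      intro x; rw [abs_mul, abs_abs, ← abs_mul]
    simp only [e3, e4, e5] at key
    have hsumb0 : (0:ℝ) ≤ ∑ e, (w e * b e) ^ q :=
      Finset.sum_nonneg fun e _ => Real.rpow_nonneg (mul_nonneg (hw e).le (hb e)) _
    have hf1 : (∑ e, (w e * b e) ^ q) ^ (1 / (q / (q - 1))) ≤ 5 * q * K ^ (q - 1) := by
      have h5q : (1:ℝ) ≤ 5 * q := by linarith
      have : (∑ e, (w e * b e) ^ q) ^ (1 / (q / (q - 1))) ≤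
          (5 * q * K ^ q) ^ (1 / (q / (q - 1))) :=
        Real.rpow_le_rpow hsumb0 hWb
          (by have h : (0:ℝ) < q/(q-1) := div_pos hq0 (by linarith); positivity)
      refine this.trans ?_
      rw [one_div_div q (q-1),
        Real.mul_rpow (by positivity) (Real.rpow_nonneg hK0.le _),
        ← Real.rpow_mul hK0.le, show q * ((q-1)/q) = q - 1 by rw [mul_comm, div_mul_cancel₀ _ hq0.ne']]
      have : (5 * q) ^ ((q-1)/q) ≤ (5 * q) ^ (1:ℝ) :=
        Real.rpow_le_rpow_of_exponent_le h5q (by rw [div_le_one hq0]; linarith)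
      rw [Real.rpow_one] at this
      exact mul_le_mul_of_nonneg_right this hKq1.le
    have hRHS1 : (0:ℝ) ≤ (∑ e, (w e * b e) ^ q) ^ (1 / (q / (q - 1))) :=
      Real.rpow_nonneg hsumb0 _
    calc ∑ e, w e ^ q * b e ^ (q - 1) * |cs e|
        ≤ (∑ e, (w e * b e) ^ q) ^ (1 / (q / (q - 1))) *
            (∑ e, |w e * cs e| ^ q) ^ (1 / q) := key
      _ ≤ (5 * q * K ^ (q - 1)) * 2 :=
          mul_le_mul hf1 hWcq (Real.rpow_nonneg
            (Finset.sum_nonneg fun e _ => Real.rpow_nonneg (abs_nonneg _) _) _)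
            (by positivity)
      _ = 10 * q * K ^ (q - 1) := by ring
  have split : ∑ e, (K ^ (q - 2) * r e ^ 2 * a e + w e ^ q * b e ^ (q - 1)) * |cs e| =
      (∑ e, K ^ (q - 2) * r e ^ 2 * a e * |cs e|) +
      ∑ e, w e ^ q * b e ^ (q - 1) * |cs e| := by
    rw [← Finset.sum_add_distrib]; congr 1; ext e; ring
  rw [split]
  nlinarith [hKq1, hq]
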